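/- Let V be a ℂ-vector space with basis (e_i) and n ≥ 2. Then the two-sided ideal of the tensor algebra T(V) generated by all partial symmetrizations 𝒮(v₁^{⊗n₁} ⊗ ⋯ ⊗ v_p^{⊗n_p}) with v₁,…,v_p linearly independent and n₁ + ⋯ + n_p = n equals the two-sided ideal generated by the full symmetrizations Σ_{σ∈S_n} e_{i_{σ(1)}} ⊗ ⋯ ⊗ e_{i_{σ(n)}} of n-tuples of basis vectors; hence the n-exterior algebra can equivalently be presented by the generators e_i and the relations Σ_{σ∈S_n} e_{i_{σ(1)}} ⋯ e_{i_{σ(n)}} = 0. -/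

import Mathlib

/-- The set of partial symmetrizations `𝒮(v₁^{⊗n₁} ⊗ ⋯ ⊗ v_p^{⊗n_p})` in the
tensor algebra, for `v₁,…,v_p` linearly independent and `n₁ + ⋯ + n_p = n`
with all `n_j > 0`: each is the sum of the `n!/(n₁!⋯n_p!)` distinct tensor
monomials obtained by permuting the factors. -/
def partialSyms (V : Type*) [AddCommGroup V] [Module ℂ V] (n : ℕ) :
    Set (TensorAlgebra ℂ V) :=
  {a | ∃ (p : ℕ) (v : Fin p → V), LinearIndependent ℂ v ∧
    ∃ m : Fin p → ℕ, (∀ j, 0 < m j) ∧ (∑ j, m j = n) ∧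
      a = ∑ g ∈ Finset.univ.filter
            (fun g : Fin n → Fin p =>
              ∀ j, (Finset.univ.filter fun i => g i = j).card = m j),
          (List.ofFn fun i => TensorAlgebra.ι ℂ (v (g i))).prod}

/-- The set of full symmetrizations `Σ_{σ∈S_n} e_{i_{σ(1)}} ⊗ ⋯ ⊗ e_{i_{σ(n)}}`
of `n`-tuples of basis vectors. -/
def fullSymsOfBasis {ι : Type*} (V : Type*) [AddCommGroup V] [Module ℂ V]
    (e : Module.Basis ι ℂ V) (n : ℕ) : Set (TensorAlgebra ℂ V) :=
  {a | ∃ w : Fin n → ι,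
    a = ∑ σ : Equiv.Perm (Fin n),
      (List.ofFn fun i => TensorAlgebra.ι ℂ (e (w (σ i)))).prod}

/- ### Auxiliary combinatorial lemmas -/

private lemma fiber_card_comp_perm {n p : ℕ} (g₀ : Fin n → Fin p)
    (σ : Equiv.Perm (Fin n)) (j : Fin p) :
    (Finset.univ.filter fun i => g₀ (σ i) = j).card
      = (Finset.univ.filter fun i => g₀ i = j).card := by
  rw [← Fintype.card_subtype, ← Fintype.card_subtype]
  exact Fintype.card_congr (σ.subtypeEquiv fun a => Iff.rfl)

private lemma exists_perm_comp_eq {n p : ℕ} {b g₀ : Fin n → Fin p}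
    (h : ∀ j, (Finset.univ.filter fun i => b i = j).card
        = (Finset.univ.filter fun i => g₀ i = j).card) :
    ∃ σ : Equiv.Perm (Fin n), g₀ ∘ ⇑σ = b := by
  have φ : ∀ j, {i // b i = j} ≃ {i // g₀ i = j} := fun j =>
    Fintype.equivOfCardEq (by
      rw [Fintype.card_subtype, Fintype.card_subtype]; exact h j)
  exact ⟨Equiv.ofFiberEquiv φ, funext fun i => Equiv.ofFiberEquiv_map φ i⟩

/-- The key combinatorial identity: summing `f (g₀ ∘ σ)` over all permutations `σ`
equals the size of the stabilizer of `g₀` times the sum of `f g` over all `g`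
having the same fiber cardinalities as `g₀`. -/
private lemma sum_perm_comp {M : Type*} [AddCommMonoid M] {n p : ℕ} (g₀ : Fin n → Fin p)
    (f : (Fin n → Fin p) → M) :
    ∑ σ : Equiv.Perm (Fin n), f (g₀ ∘ ⇑σ) =
      (Finset.univ.filter fun τ : Equiv.Perm (Fin n) => g₀ ∘ ⇑τ = g₀).card •
        ∑ g ∈ Finset.univ.filter (fun g : Fin n → Fin p =>
            ∀ j, (Finset.univ.filter fun i => g i = j).card
              = (Finset.univ.filter fun i => g₀ i = j).card), f g := by
  refine (Finset.sum_comp f (fun σ : Equiv.Perm (Fin n) => g₀ ∘ ⇑σ)).trans ?_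
  have himg : (Finset.univ : Finset (Equiv.Perm (Fin n))).image (fun σ : Equiv.Perm (Fin n) => g₀ ∘ ⇑σ)
      = Finset.univ.filter (fun g : Fin n → Fin p =>
          ∀ j, (Finset.univ.filter fun i => g i = j).card
            = (Finset.univ.filter fun i => g₀ i = j).card) := by
    ext b
    simp only [Finset.mem_image, Finset.mem_filter, Finset.mem_univ, true_and]
    constructor
    · rintro ⟨σ, rfl⟩ j
      exact fiber_card_comp_perm g₀ σ j
    · intro hb
      obtain ⟨σ, hσ⟩ := exists_perm_comp_eq hb
      exact ⟨σ, hσ⟩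
  rw [himg, Finset.smul_sum]
  refine Finset.sum_congr rfl fun b hb => ?_
  simp only [Finset.mem_filter, Finset.mem_univ, true_and] at hb
  obtain ⟨σ₀, hσ₀⟩ := exists_perm_comp_eq hb
  congr 1
  refine Finset.card_bij' (fun σ _ => σ * σ₀⁻¹) (fun τ _ => τ * σ₀) ?_ ?_ ?_ ?_
  · intro σ hσ
    simp only [Finset.mem_filter, Finset.mem_univ, true_and] at hσ ⊢
    funext i
    have h1 : g₀ (σ (σ₀⁻¹ i)) = b (σ₀⁻¹ i) := congrFun hσ _
    have h2 : b (σ₀⁻¹ i) = g₀ (σ₀ (σ₀⁻¹ i)) := (congrFun hσ₀ _).symm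
    simpa [Equiv.Perm.mul_apply] using h1.trans (h2.trans (by simp))
  · intro τ hτ
    simp only [Finset.mem_filter, Finset.mem_univ, true_and] at hτ ⊢
    funext i
    have h1 : g₀ (τ (σ₀ i)) = g₀ (σ₀ i) := congrFun hτ _
    have h2 : g₀ (σ₀ i) = b i := congrFun hσ₀ _
    simpa [Equiv.Perm.mul_apply] using h1.trans h2
  · intro σ _; group
  · intro τ _; group

/- ### The symmetrization multilinear map -/

/-- Full symmetrization as a multilinear map `V^n → T(V)`. -/
noncomputable def symMap (V : Type*) [AddCommGroup V] [Module ℂ V] (n : ℕ) :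
    MultilinearMap ℂ (fun _ : Fin n => V) (TensorAlgebra ℂ V) :=
  ∑ σ : Equiv.Perm (Fin n),
    ((MultilinearMap.mkPiAlgebraFin ℂ n (TensorAlgebra ℂ V)).compLinearMap
      (fun _ => TensorAlgebra.ι ℂ)).domDomCongr σ

private lemma symMap_apply (V : Type*) [AddCommGroup V] [Module ℂ V] (n : ℕ)
    (w : Fin n → V) :
    symMap V n w
      = ∑ σ : Equiv.Perm (Fin n),
          (List.ofFn fun i => TensorAlgebra.ι ℂ (w (σ i))).prod := by
  simp [symMap, MultilinearMap.domDomCongr_apply, MultilinearMap.compLinearMap_apply,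
    MultilinearMap.mkPiAlgebraFin_apply]

private lemma smul_mem_tsi {V : Type*} [AddCommGroup V] [Module ℂ V]
    (I : TwoSidedIdeal (TensorAlgebra ℂ V)) (c : ℂ) {x : TensorAlgebra ℂ V}
    (hx : x ∈ I) : c • x ∈ I := by
  rw [Algebra.smul_def]
  exact I.mul_mem_left _ _ hx

private lemma symMap_mem_span {ι : Type*} (V : Type*) [AddCommGroup V] [Module ℂ V]
    (e : Module.Basis ι ℂ V) (n : ℕ) (w : Fin n → V) :
    symMap V n w ∈ TwoSidedIdeal.span (fullSymsOfBasis V e n) := by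
  classical
  have hw : w = fun i => ∑ j ∈ (e.repr (w i)).support, e.repr (w i) j • e j := by
    funext i
    conv_lhs => rw [← e.linearCombination_repr (w i)]
    rw [Finsupp.linearCombination_apply, Finsupp.sum]
  rw [hw, MultilinearMap.map_sum_finset]
  refine TwoSidedIdeal.finsetSum_mem _ _ _ fun r _ => ?_
  have hsmul : (symMap V n fun i => e.repr (w i) (r i) • e (r i))
      = (∏ i, e.repr (w i) (r i)) • symMap V n (fun i => e (r i)) :=
    (symMap V n).map_smul_univ _ _
  rw [hsmul]
  refine smul_mem_tsi _ _ ?_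
  exact TwoSidedIdeal.subset_span ⟨fun i => r i, symMap_apply V n (fun i => e (r i))⟩

/-- The two-sided ideal generated by all partial symmetrizations of
linearly independent vectors equals the two-sided ideal generated by the
full symmetrizations of `n`-tuples of basis vectors; hence the `n`-exterior
algebra is presented by the generators `e_i` and the relations
`Σ_{σ∈S_n} e_{i_{σ(1)}} ⋯ e_{i_{σ(n)}} = 0`. -/
theorem partialSyms_span_eq_fullSyms_span
    {ι : Type*} (V : Type*) [AddCommGroup V] [Module ℂ V]
    (e : Module.Basis ι ℂ V) (n : ℕ) (hn : 2 ≤ n) :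
    TwoSidedIdeal.span (partialSyms V n) =
      TwoSidedIdeal.span (fullSymsOfBasis V e n) := by
  classical
  have key : ∀ (p : ℕ) (v : Fin p → V) (g₀ : Fin n → Fin p),
      (∑ σ : Equiv.Perm (Fin n),
        (List.ofFn fun i => TensorAlgebra.ι ℂ (v (g₀ (σ i)))).prod)
        = (Finset.univ.filter fun τ : Equiv.Perm (Fin n) => g₀ ∘ ⇑τ = g₀).card •
          ∑ g ∈ Finset.univ.filter (fun g : Fin n → Fin p =>
              ∀ j, (Finset.univ.filter fun i => g i = j).card
                = (Finset.univ.filter fun i => g₀ i = j).card),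
            (List.ofFn fun i => TensorAlgebra.ι ℂ (v (g i))).prod := fun p v g₀ =>
    sum_perm_comp g₀ (fun g => (List.ofFn fun i => TensorAlgebra.ι ℂ (v (g i))).prod)
  have hNpos : ∀ (p : ℕ) (g₀ : Fin n → Fin p),
      0 < (Finset.univ.filter fun τ : Equiv.Perm (Fin n) => g₀ ∘ ⇑τ = g₀).card := by
    intro p g₀
    refine Finset.card_pos.mpr ⟨1, ?_⟩
    simp only [Finset.mem_filter, Finset.mem_univ, true_and]
    rfl
  have hsub1 : partialSyms V n ⊆ (TwoSidedIdeal.span (fullSymsOfBasis V e n) : Set _) := by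
    rintro a ⟨p, v, -, m, -, -, rfl⟩
    rcases (Finset.univ.filter (fun g : Fin n → Fin p =>
        ∀ j, (Finset.univ.filter fun i => g i = j).card = m j)).eq_empty_or_nonempty with
      hfe | ⟨g₀, hg₀⟩
    · rw [hfe, Finset.sum_empty]
      exact TwoSidedIdeal.zero_mem _
    · simp only [Finset.mem_filter, Finset.mem_univ, true_and] at hg₀
      have hset : (Finset.univ.filter (fun g : Fin n → Fin p =>
            ∀ j, (Finset.univ.filter fun i => g i = j).card = m j))
          = (Finset.univ.filter (fun g : Fin n → Fin p =>
            ∀ j, (Finset.univ.filter fun i => g i = j).card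
              = (Finset.univ.filter fun i => g₀ i = j).card)) := by
        refine Finset.filter_congr fun g _ => ?_
        simp only [hg₀]
      set N := (Finset.univ.filter fun τ : Equiv.Perm (Fin n) => g₀ ∘ ⇑τ = g₀).card with hN
      have hsym : symMap V n (fun i => v (g₀ i))
          = N • ∑ g ∈ Finset.univ.filter (fun g : Fin n → Fin p =>
              ∀ j, (Finset.univ.filter fun i => g i = j).card
                = (Finset.univ.filter fun i => g₀ i = j).card),
            (List.ofFn fun i => TensorAlgebra.ι ℂ (v (g i))).prod := by
        rw [symMap_apply]
        exact key p v g₀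
      have hNne : (N : ℂ) ≠ 0 := Nat.cast_ne_zero.mpr (hNpos p g₀).ne'
      have ha : (∑ g ∈ Finset.univ.filter (fun g : Fin n → Fin p =>
            ∀ j, (Finset.univ.filter fun i => g i = j).card = m j),
            (List.ofFn fun i => TensorAlgebra.ι ℂ (v (g i))).prod)
          = (N : ℂ)⁻¹ • symMap V n (fun i => v (g₀ i)) := by
        rw [hset, hsym, ← Nat.cast_smul_eq_nsmul ℂ N, inv_smul_smul₀ hNne]
      rw [ha]
      exact smul_mem_tsi _ _ (symMap_mem_span V e n _)
  have hsub2 : fullSymsOfBasis V e n ⊆ (TwoSidedIdeal.span (partialSyms V n) : Set _) := by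
    rintro b ⟨w, rfl⟩
    set s : Finset ι := Finset.univ.image w with hs
    set p : ℕ := s.card with hp
    set wb : Fin p → ι := fun j => (s.equivFin.symm j : ι) with hwb
    have hwbinj : Function.Injective wb := fun j k h =>
      s.equivFin.symm.injective (Subtype.ext h)
    set g₀ : Fin n → Fin p :=
      fun i => s.equivFin ⟨w i, Finset.mem_image_of_mem w (Finset.mem_univ i)⟩ with hg₀
    have hwbg₀ : ∀ i, wb (g₀ i) = w i := by
      intro i
      rw [hwb, hg₀]
      simp
    set v : Fin p → V := fun j => e (wb j) with hv
    have hvli : LinearIndependent ℂ v := e.linearIndependent.comp wb hwbinj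
    set m : Fin p → ℕ := fun j => (Finset.univ.filter fun i => g₀ i = j).card with hm
    have hm0 : ∀ j, 0 < m j := by
      intro j
      refine Finset.card_pos.mpr ?_
      obtain ⟨i, -, hix⟩ := Finset.mem_image.mp (s.equivFin.symm j).2
      refine ⟨i, Finset.mem_filter.mpr ⟨Finset.mem_univ _, ?_⟩⟩
      show s.equivFin ⟨w i, _⟩ = j
      have : (⟨w i, Finset.mem_image_of_mem w (Finset.mem_univ i)⟩ : {x // x ∈ s})
          = s.equivFin.symm j := Subtype.ext hix
      rw [this, Equiv.apply_symm_apply]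
    have hmn : ∑ j, m j = n := by
      have hc := Finset.card_eq_sum_card_fiberwise
        (f := g₀) (s := Finset.univ) (t := Finset.univ) (fun x _ => Finset.mem_univ _)
      simpa using hc.symm
    set A := ∑ g ∈ Finset.univ.filter (fun g : Fin n → Fin p =>
        ∀ j, (Finset.univ.filter fun i => g i = j).card = m j),
      (List.ofFn fun i => TensorAlgebra.ι ℂ (v (g i))).prod with hA
    have hAmem : A ∈ partialSyms V n := ⟨p, v, hvli, m, hm0, hmn, rfl⟩
    have hb : (∑ σ : Equiv.Perm (Fin n),
        (List.ofFn fun i => TensorAlgebra.ι ℂ (e (w (σ i)))).prod)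
        = (Finset.univ.filter fun τ : Equiv.Perm (Fin n) => g₀ ∘ ⇑τ = g₀).card • A := by
      have hk := key p v g₀
      have hconv : ∀ σ : Equiv.Perm (Fin n),
          (List.ofFn fun i => TensorAlgebra.ι ℂ (v (g₀ (σ i)))).prod
            = (List.ofFn fun i => TensorAlgebra.ι ℂ (e (w (σ i)))).prod := by
        intro σ
        rw [hv]
        simp only [hwbg₀]
      rw [Finset.sum_congr rfl (fun σ _ => hconv σ)] at hk
      rw [hk, hA, hm]
    rw [hb]
    exact TwoSidedIdeal.nsmul_mem _ _ (TwoSidedIdeal.subset_span hAmem)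
  apply le_antisymm
  · intro x hx
    rw [TwoSidedIdeal.mem_span_iff] at hx
    exact hx _ hsub1
  · intro x hx
    rw [TwoSidedIdeal.mem_span_iff] at hx
    exact hx _ hsub2
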